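/- Kernel of the propagation Hamiltonian consists exactly of history states: Let W be a finite-dimensional complex Hilbert space, T ≥ 1, and U_1, …, U_T unitaries on W. On ℂ^{T+1} ⊗ W define H_p = (1/2) Σ_{t=0}^{T−1} [ (|t⟩⟨t| + |t+1⟩⟨t+1|) ⊗ Id_W − |t+1⟩⟨t| ⊗ U_{t+1} − |t⟩⟨t+1| ⊗ U_{t+1}† ]. Then H_p is self-adjoint and positive semidefinite, and ker H_p = { Σ_{t=0}^{T} |t⟩ ⊗ (U_t U_{t−1} ⋯ U_1) ξ : ξ ∈ W } (with the empty product for t = 0 equal to Id_W); in particular dim ker H_p = dim W. -/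

import Mathlib

open scoped BigOperators

noncomputable section

/-- `histFun T U t` is the composite `U_t ∘ U_{t-1} ∘ ⋯ ∘ U_1` of the first `t`
circuit unitaries (the empty composite for `t = 0` being the identity). -/
def histFun {W : Type*} [NormedAddCommGroup W] [InnerProductSpace ℂ W]
    (T : ℕ) (U : Fin T → (W ≃ₗᵢ[ℂ] W)) : ℕ → W → W
  | 0 => id
  | n + 1 => if h : n < T then (fun w => U ⟨n, h⟩ (histFun T U n w)) else histFun T U n

/-- Feynman–Kitaev propagation Hamiltonian
`H_p = (1/2) ∑_{t=0}^{T-1} [(|t⟩⟨t| + |t+1⟩⟨t+1|) ⊗ 1 - |t+1⟩⟨t| ⊗ U_{t+1} - |t⟩⟨t+1| ⊗ U_{t+1}†]`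
acting on `ℂ^{T+1} ⊗ W`, realized as the space of functions `Fin (T+1) → W`. -/
def propHam {W : Type*} [NormedAddCommGroup W] [InnerProductSpace ℂ W]
    (T : ℕ) (U : Fin T → (W ≃ₗᵢ[ℂ] W)) :
    ((Fin (T + 1) → W) →ₗ[ℂ] (Fin (T + 1) → W)) :=
  (2 : ℂ)⁻¹ • ∑ t : Fin T,
    ((LinearMap.single ℂ (fun _ : Fin (T + 1) => W) t.castSucc) ∘ₗ
        ((LinearMap.proj t.castSucc : (∀ _ : Fin (T + 1), W) →ₗ[ℂ] W) -
          ((U t).symm.toLinearEquiv.toLinearMap ∘ₗ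
            (LinearMap.proj t.succ : (∀ _ : Fin (T + 1), W) →ₗ[ℂ] W))) +
      (LinearMap.single ℂ (fun _ : Fin (T + 1) => W) t.succ) ∘ₗ
        ((LinearMap.proj t.succ : (∀ _ : Fin (T + 1), W) →ₗ[ℂ] W) -
          ((U t).toLinearEquiv.toLinearMap ∘ₗ
            (LinearMap.proj t.castSucc : (∀ _ : Fin (T + 1), W) →ₗ[ℂ] W))))

section aux
variable {W : Type*} [NormedAddCommGroup W] [InnerProductSpace ℂ W]

lemma propHam_apply (T : ℕ) (U : Fin T → (W ≃ₗᵢ[ℂ] W)) (ψ : Fin (T + 1) → W) (s : Fin (T + 1)) :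
    propHam T U ψ s = (2 : ℂ)⁻¹ • ∑ t : Fin T,
      (Pi.single (M := fun _ : Fin (T + 1) => W) t.castSucc
          (ψ t.castSucc - (U t).symm (ψ t.succ)) s
        + Pi.single (M := fun _ : Fin (T + 1) => W) t.succ
          (ψ t.succ - U t (ψ t.castSucc)) s) := by
  simp [propHam, LinearMap.sum_apply, Finset.sum_apply]

lemma sum_inner_single {n : ℕ} (a : Fin n) (v : W) (χ : Fin n → W) :
    ∑ s, (inner ℂ (Pi.single (M := fun _ : Fin n => W) a v s) (χ s) : ℂ) = inner ℂ v (χ a) := by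
  rw [Finset.sum_eq_single a]
  · simp
  · intro s _ hs
    rw [Pi.single_eq_of_ne hs, inner_zero_left]
  · simp


lemma key (T : ℕ) (U : Fin T → (W ≃ₗᵢ[ℂ] W)) (ψ χ : Fin (T + 1) → W) :
    ∑ s, (inner ℂ (propHam T U ψ s) (χ s) : ℂ) =
      (2 : ℂ)⁻¹ * ∑ t : Fin T,
        (inner ℂ (ψ t.succ - U t (ψ t.castSucc)) (χ t.succ - U t (χ t.castSucc)) : ℂ) := by
  have h1 : ∀ s, (inner ℂ (propHam T U ψ s) (χ s) : ℂ)
      = (2:ℂ)⁻¹ * ∑ t : Fin T,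
        ((inner ℂ (Pi.single (M := fun _ : Fin (T+1) => W) t.castSucc
            (ψ t.castSucc - (U t).symm (ψ t.succ)) s) (χ s) : ℂ)
         + inner ℂ (Pi.single (M := fun _ : Fin (T+1) => W) t.succ
            (ψ t.succ - U t (ψ t.castSucc)) s) (χ s)) := by
    intro s
    rw [propHam_apply, inner_smul_left, sum_inner]
    simp [inner_add_left, Complex.conj_ofNat]
  rw [Finset.sum_congr rfl (fun s _ => h1 s), ← Finset.mul_sum, Finset.sum_comm]
  congr 1
  refine Finset.sum_congr rfl fun t _ => ?_
  rw [Finset.sum_add_distrib, sum_inner_single, sum_inner_single]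
  have h2 : (inner ℂ (ψ t.succ - U t (ψ t.castSucc)) (U t (χ t.castSucc)) : ℂ)
      = - inner ℂ (ψ t.castSucc - (U t).symm (ψ t.succ)) (χ t.castSucc) := by
    have h3 := (U t).inner_map_map (𝕜 := ℂ)
      ((U t).symm (ψ t.succ - U t (ψ t.castSucc))) (χ t.castSucc)
    rw [(U t).apply_symm_apply] at h3
    rw [h3, map_sub, (U t).symm_apply_apply, ← neg_sub, inner_neg_left]
  rw [inner_sub_right, h2]
  ring

lemma histFun_add (T : ℕ) (U : Fin T → (W ≃ₗᵢ[ℂ] W)) (n : ℕ) (x y : W) :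
    histFun T U n (x + y) = histFun T U n x + histFun T U n y := by
  induction n with
  | zero => rfl
  | succ n ih => by_cases h : n < T <;> simp [histFun, h, ih]

lemma histFun_smul (T : ℕ) (U : Fin T → (W ≃ₗᵢ[ℂ] W)) (n : ℕ) (c : ℂ) (x : W) :
    histFun T U n (c • x) = c • histFun T U n x := by
  induction n with
  | zero => rfl
  | succ n ih => by_cases h : n < T <;> simp [histFun, h, ih]

/-- The history-state map `ξ ↦ (t ↦ U_t ⋯ U_1 ξ)` as a linear map. -/
def histL (T : ℕ) (U : Fin T → (W ≃ₗᵢ[ℂ] W)) : W →ₗ[ℂ] (Fin (T + 1) → W) where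
  toFun := fun ξ t => histFun T U t.val ξ
  map_add' := fun x y => funext fun t => histFun_add T U t.val x y
  map_smul' := fun c x => funext fun t => histFun_smul T U t.val c x

lemma mem_ker_iff (T : ℕ) (U : Fin T → (W ≃ₗᵢ[ℂ] W)) (ψ : Fin (T + 1) → W) :
    propHam T U ψ = 0 ↔ ∃ ξ : W, ψ = fun t => histFun T U t.val ξ := by
  constructor
  · intro h
    have hz : ∑ s, (inner ℂ (propHam T U ψ s) (ψ s) : ℂ) = 0 := by rw [h]; simp
    rw [key] at hz
    have hS : ∑ t : Fin T,
        (inner ℂ (ψ t.succ - U t (ψ t.castSucc)) (ψ t.succ - U t (ψ t.castSucc)) : ℂ) = 0 := by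
      rcases mul_eq_zero.mp hz with h' | h'
      · exact absurd h' (by norm_num)
      · exact h'
    have hR : ∑ t : Fin T, ‖ψ t.succ - U t (ψ t.castSucc)‖ ^ 2 = 0 := by
      have := congrArg Complex.re hS
      simpa [inner_self_eq_norm_sq_to_K, ← Complex.ofReal_pow] using this
    have hD : ∀ t : Fin T, ψ t.succ = U t (ψ t.castSucc) := by
      intro t
      have := (Finset.sum_eq_zero_iff_of_nonneg
        (fun t _ => sq_nonneg ‖ψ t.succ - U t (ψ t.castSucc)‖)).mp hR t (Finset.mem_univ t)
      have h0 : ψ t.succ - U t (ψ t.castSucc) = 0 := by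
        simpa [pow_eq_zero_iff] using this
      exact (sub_eq_zero.mp h0)
    refine ⟨ψ 0, funext fun t => ?_⟩
    have haux : ∀ n, ∀ hn : n < T + 1, ψ ⟨n, hn⟩ = histFun T U n (ψ 0) := by
      intro n
      induction n with
      | zero =>
        intro hn
        have h0 : (⟨0, hn⟩ : Fin (T + 1)) = 0 := by ext; simp
        rw [h0]; rfl
      | succ n ih =>
        intro hn
        have hnT : n < T := Nat.lt_of_succ_lt_succ hn
        have hs : (⟨n + 1, hn⟩ : Fin (T + 1)) = (⟨n, hnT⟩ : Fin T).succ := rfl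
        rw [hs, hD ⟨n, hnT⟩]
        have hc : ((⟨n, hnT⟩ : Fin T).castSucc) = (⟨n, Nat.lt_succ_of_lt hnT⟩ : Fin (T + 1)) :=
          rfl
        rw [hc, ih _]
        simp [histFun, hnT]
    exact haux t.val t.isLt
  · rintro ⟨ξ, rfl⟩
    have hD : ∀ t : Fin T,
        histFun T U (t.succ : Fin (T + 1)).val ξ
          = U t (histFun T U ((t.castSucc : Fin (T + 1))).val ξ) := by
      intro t
      simp [Fin.val_succ, histFun, t.isLt, Fin.coe_castSucc]
    funext s
    rw [propHam_apply, Pi.zero_apply, Finset.sum_eq_zero, smul_zero]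
    intro t _
    show Pi.single (M := fun _ : Fin (T + 1) => W) t.castSucc
        (histFun T U (t.castSucc : Fin (T + 1)).val ξ
          - (U t).symm (histFun T U (t.succ : Fin (T + 1)).val ξ)) s
      + Pi.single (M := fun _ : Fin (T + 1) => W) t.succ
        (histFun T U (t.succ : Fin (T + 1)).val ξ
          - U t (histFun T U (t.castSucc : Fin (T + 1)).val ξ)) s = 0
    rw [hD t, (U t).symm_apply_apply, sub_self, sub_self, Pi.single_zero, Pi.single_zero,
      Pi.zero_apply, add_zero]

end aux


/-- **Kernel of the propagation Hamiltonian.**  `H_p` is self-adjoint and positive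
semidefinite (with respect to the tensor-product inner product
`⟪ψ, χ⟫ = ∑_t ⟪ψ t, χ t⟫`), its kernel consists exactly of the history states
`∑_t |t⟩ ⊗ U_t ⋯ U_1 ξ`, and `dim ker H_p = dim W`. -/
theorem propHam_kernel {W : Type*} [NormedAddCommGroup W] [InnerProductSpace ℂ W]
    [FiniteDimensional ℂ W] (T : ℕ) (hT : 1 ≤ T) (U : Fin T → (W ≃ₗᵢ[ℂ] W)) :
    (∀ ψ χ : Fin (T + 1) → W,
      ∑ t, (inner ℂ (propHam T U ψ t) (χ t) : ℂ) =
        ∑ t, (inner ℂ (ψ t) (propHam T U χ t) : ℂ)) ∧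
    (∀ ψ : Fin (T + 1) → W, 0 ≤ (∑ t, (inner ℂ (ψ t) (propHam T U ψ t) : ℂ)).re) ∧
    ((LinearMap.ker (propHam T U) : Set (Fin (T + 1) → W)) =
      {ψ | ∃ ξ : W, ψ = fun t => histFun T U t.val ξ}) ∧
    Module.finrank ℂ (LinearMap.ker (propHam T U)) = Module.finrank ℂ W := by
  refine ⟨?_, ?_, ?_, ?_⟩
  · intro ψ χ
    have h1 : ∑ t, (inner ℂ (ψ t) (propHam T U χ t) : ℂ)
        = starRingEnd ℂ (∑ t, (inner ℂ (propHam T U χ t) (ψ t) : ℂ)) := by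
      rw [map_sum]; simp [inner_conj_symm]
    rw [h1, key, key, map_mul, map_inv₀, Complex.conj_ofNat, map_sum]
    congr 1
    exact Finset.sum_congr rfl fun t _ => (inner_conj_symm _ _).symm
  · intro ψ
    have h1 : ∑ t, (inner ℂ (ψ t) (propHam T U ψ t) : ℂ)
        = starRingEnd ℂ (∑ t, (inner ℂ (propHam T U ψ t) (ψ t) : ℂ)) := by
      rw [map_sum]; simp [inner_conj_symm]
    rw [h1, Complex.conj_re, key]
    have h2 : ∑ t : Fin T,
        (inner ℂ (ψ t.succ - U t (ψ t.castSucc)) (ψ t.succ - U t (ψ t.castSucc)) : ℂ)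
        = ((∑ t : Fin T, ‖ψ t.succ - U t (ψ t.castSucc)‖ ^ 2 : ℝ) : ℂ) := by
      push_cast
      exact Finset.sum_congr rfl fun t _ => inner_self_eq_norm_sq_to_K _
    rw [h2, show ((2 : ℂ)⁻¹ * ((∑ t : Fin T, ‖ψ t.succ - U t (ψ t.castSucc)‖ ^ 2 : ℝ) : ℂ))
        = (((2 : ℝ)⁻¹ * ∑ t : Fin T, ‖ψ t.succ - U t (ψ t.castSucc)‖ ^ 2 : ℝ) : ℂ) by
        push_cast; ring, Complex.ofReal_re]
    positivity
  · ext ψ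
    simp only [SetLike.mem_coe, LinearMap.mem_ker, Set.mem_setOf_eq]
    exact mem_ker_iff T U ψ
  · have hk : LinearMap.ker (propHam T U) = LinearMap.range (histL T U) := by
      ext ψ
      rw [LinearMap.mem_ker, mem_ker_iff, LinearMap.mem_range]
      exact ⟨fun ⟨ξ, h⟩ => ⟨ξ, h.symm⟩, fun ⟨ξ, h⟩ => ⟨ξ, h.symm⟩⟩
    rw [hk]
    apply LinearMap.finrank_range_of_inj
    intro x y hxy
    have := congrFun hxy 0
    simpa [histL, histFun] using this


end
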